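/- (Lemma B.2: lattice Poincaré inequality, uniform in the lattice spacing) Let d ≥ 1 and ε = 1/N for a positive integer N. There is a constant C depending only on d (not on ε or u) such that for every u : (εℤ)^d → ℝ vanishing at every lattice point outside the open cube (0,1)^d: ∫_{(εℤ)^d} dx |u(x)|² ≤ C Σ_{μ=1}^d ∫_{(εℤ)^d} dx |(∇_{ê_μ} u)(x)|². -/

import Mathlib

open scoped ENNReal BigOperators

namespace FRD

abbrev Pt (d : ℕ) := Fin d → ℝ
abbrev Idx (d : ℕ) := Fin d → ℤ

variable {d : ℕ}

/-- The lattice point of `(εℤ)^d` with integer coordinates `k`. -/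
noncomputable def toPt (ε : ℝ) (k : Idx d) : Pt d := fun i => ε * (k i : ℝ)

/-- The lattice `(εℤ)^d` as a subset of `ℝ^d`. -/
def latt (d : ℕ) (ε : ℝ) : Set (Pt d) := Set.range (toPt (d := d) ε)

/-- Signed unit direction: `e.1` is the coordinate, `e.2` the sign. -/
noncomputable def sdir (d : ℕ) (e : Fin d × Bool) : Pt d :=
  Pi.single e.1 (if e.2 then (1 : ℝ) else -1)

/-- Forward/backward lattice derivative in the signed direction `e`. -/
noncomputable def nabla (ε : ℝ) (e : Fin d × Bool) (f : Pt d → ℝ) (x : Pt d) : ℝ :=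
  ε⁻¹ * (f (x + ε • sdir d e) - f x)

/-- Iterated lattice derivative. -/
noncomputable def nablaList (ε : ℝ) : List (Fin d × Bool) → (Pt d → ℝ) → Pt d → ℝ
  | [], f => f
  | e :: es, f => nabla ε e (nablaList ε es f)

/-- Lattice Laplacian `Δ_ε`. -/
noncomputable def latLap (ε : ℝ) (f : Pt d → ℝ) (x : Pt d) : ℝ :=
  ε⁻¹ ^ 2 * ∑ μ : Fin d,
    (f (x + ε • (Pi.single μ 1 : Pt d)) + f (x - ε • (Pi.single μ 1 : Pt d)) - 2 * f x)

/-- Open cube of edge length `R` centered at `z` (sup-metric). -/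
def cubeC (z : Pt d) (R : ℝ) : Set (Pt d) := {x | ∀ i, |x i - z i| < R / 2}

/-- `U_ε(R)` (centered at `z`). -/
def UC (ε : ℝ) (z : Pt d) (R : ℝ) : Set (Pt d) := cubeC z R ∩ latt d ε

/-- Lattice boundary `∂U_ε(R)` (centered at `z`). -/
def bdryC (ε : ℝ) (z : Pt d) (R : ℝ) : Set (Pt d) :=
  {y | y ∈ latt d ε ∧ y ∉ UC ε z R ∧ ∃ x ∈ UC ε z R, ‖x - y‖ = ε}

/-- `Ū_ε(R) = U_ε(R) ∪ ∂U_ε(R)`. -/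
def clC (ε : ℝ) (z : Pt d) (R : ℝ) : Set (Pt d) := UC ε z R ∪ bdryC ε z R

/-- `h` solves the lattice Dirichlet problem on the cube of edge `R` centered at `z`,
with mass `a` and boundary data `f`. -/
def IsDirSol (ε : ℝ) (z : Pt d) (R a : ℝ) (f h : Pt d → ℝ) : Prop :=
  (∀ x ∈ UC ε z R, a * h x - latLap ε h x = 0) ∧ ∀ x ∈ bdryC ε z R, h x = f x

/-- Lattice integral of `F` over the lattice points lying in `X` (`ℝ≥0∞`-valued). -/
noncomputable def eint (ε : ℝ) (X : Set (Pt d)) (F : Pt d → ℝ) : ℝ≥0∞ :=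
  ∑' k : Idx d, Set.indicator X (fun x => ENNReal.ofReal (ε ^ d * F x)) (toPt ε k)

/-- Squared lattice Sobolev norm `‖f‖²_{H_K(X_ε)}`. -/
noncomputable def sobSq (ε : ℝ) (K : ℕ) (X : Set (Pt d)) (f : Pt d → ℝ) : ℝ≥0∞ :=
  ∑ j ∈ Finset.range (K + 1), (2 : ℝ≥0∞)⁻¹ ^ j *
    ∑ es : Fin j → Fin d × Bool,
      eint ε X fun x => (nablaList ε (List.ofFn es) f x) ^ 2

/-- Lattice Sobolev norm `‖f‖_{H_K(X_ε)}`. -/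
noncomputable def sobNorm (ε : ℝ) (K : ℕ) (X : Set (Pt d)) (f : Pt d → ℝ) : ℝ≥0∞ :=
  sobSq ε K X f ^ (1/2 : ℝ)

/-- Real-valued lattice integral over the whole lattice. -/
noncomputable def lint (ε : ℝ) (F : Pt d → ℝ) : ℝ := ε ^ d * ∑' k : Idx d, F (toPt ε k)

/-- Squared weighted lattice Sobolev norm `‖f‖²_{φ,K}`. -/
noncomputable def wSobSq (ε : ℝ) (K : ℕ) (φ : Pt d → ℝ) (f : Pt d → ℝ) : ℝ≥0∞ :=
  ∑ j ∈ Finset.range (K + 1), (2 : ℝ≥0∞)⁻¹ ^ j *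
    ∑ es : Fin j → Fin d × Bool,
      ∑' k : Idx d, ENNReal.ofReal
        (ε ^ d * φ (toPt ε k) * (nablaList ε (List.ofFn es) f (toPt ε k)) ^ 2)

/-- Weighted lattice Sobolev norm `‖f‖_{φ,K}`. -/
noncomputable def wSobNorm (ε : ℝ) (K : ℕ) (φ : Pt d → ℝ) (f : Pt d → ℝ) : ℝ≥0∞ :=
  wSobSq ε K φ f ^ (1/2 : ℝ)


lemma toPt_add_single (ε : ℝ) (z : Idx d) (μ : Fin d) :
    toPt ε z + ε • sdir d (μ, true) = toPt (d := d) ε (Function.update z μ (z μ + 1)) := by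
  funext i
  by_cases h : i = μ
  · subst h
    simp [toPt, sdir, Pi.single_apply]
    ring
  · simp [toPt, sdir, Pi.single_apply, h, Function.update_of_ne h]

lemma pointwise_bound (N : ℕ) (hN : 0 < N) (u : Pt d → ℝ) (μ₀ : Fin d)
    (hu : ∀ z : Idx d, ¬ (∀ i, 0 < toPt (N : ℝ)⁻¹ z i ∧ toPt (N : ℝ)⁻¹ z i < 1) →
      u (toPt (N : ℝ)⁻¹ z) = 0) (k : Idx d) :
    u (toPt (N : ℝ)⁻¹ k) ^ 2 ≤
      (if 0 ≤ k μ₀ ∧ k μ₀ ≤ (N : ℤ) then (1:ℝ) else 0) *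
        ((N : ℝ)⁻¹ * ∑ m ∈ Finset.range N,
          (nabla (N : ℝ)⁻¹ (μ₀, true) u (toPt (N : ℝ)⁻¹ (Function.update k μ₀ (m : ℤ)))) ^ 2) := by
  set ε : ℝ := (N : ℝ)⁻¹ with hε
  have hNpos : (0:ℝ) < N := by exact_mod_cast hN
  have hεpos : 0 < ε := by positivity
  -- vanishing of u at boundary columns
  have hvan : ∀ j : ℤ, (j ≤ 0 ∨ (N:ℤ) ≤ j) → u (toPt ε (Function.update k μ₀ j)) = 0 := by
    intro j hj
    apply hu
    intro hall
    rcases hall μ₀ with ⟨h1, h2⟩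
    have : toPt ε (Function.update k μ₀ j) μ₀ = ε * j := by
      simp [toPt]
    rw [this] at h1 h2
    rcases hj with hj | hj
    · have : ε * j ≤ 0 := mul_nonpos_of_nonneg_of_nonpos hεpos.le (by exact_mod_cast hj)
      linarith
    · have : (1:ℝ) ≤ ε * j := by
        have h1' : ε * (N:ℝ) = 1 := inv_mul_cancel₀ (ne_of_gt hNpos)
        have : ε * (N:ℝ) ≤ ε * j := by
          apply mul_le_mul_of_nonneg_left _ hεpos.le
          exact_mod_cast hj
        linarith
      linarith
  by_cases hk : 0 ≤ k μ₀ ∧ k μ₀ ≤ (N:ℤ)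
  · -- telescoping
    set D : ℕ → ℝ := fun m =>
      nabla ε (μ₀, true) u (toPt ε (Function.update k μ₀ (m : ℤ))) with hD
    have key : ∀ m : ℕ, u (toPt ε (Function.update k μ₀ (m:ℤ))) =
        ε * ∑ i ∈ Finset.range m, D i := by
      intro m
      induction m with
      | zero => simpa using hvan 0 (Or.inl le_rfl)
      | succ m ih =>
        have step : u (toPt ε (Function.update k μ₀ ((m:ℤ)+1))) =
            u (toPt ε (Function.update k μ₀ (m:ℤ))) + ε * D m := by
          have : D m = ε⁻¹ * (u (toPt ε (Function.update k μ₀ ((m:ℤ)+1)))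
              - u (toPt ε (Function.update k μ₀ (m:ℤ)))) := by
            rw [hD]
            simp only [nabla]
            rw [toPt_add_single ε (Function.update k μ₀ (m:ℤ)) μ₀]
            rw [Function.update_self, Function.update_idem]
          rw [this]
          field_simp
          ring
        have : ((m:ℤ)+1) = ((m+1 : ℕ) : ℤ) := by push_cast; ring
        rw [← this, step, ih, Finset.sum_range_succ]
        ring
    set n : ℕ := (k μ₀).toNat with hn
    have hnN : n ≤ N := by
      rw [hn]
      omega
    have hkn : (n : ℤ) = k μ₀ := Int.toNat_of_nonneg hk.1
    have huk : u (toPt ε k) = ε * ∑ i ∈ Finset.range n, D i := by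
      have := key n
      rwa [hkn, Function.update_eq_self] at this
    have CS : (∑ i ∈ Finset.range n, D i) ^ 2 ≤
        (n : ℝ) * ∑ i ∈ Finset.range n, D i ^ 2 := by
      have := sq_sum_le_card_mul_sum_sq (s := Finset.range n) (f := D)
      simpa using this
    have hsub : ∑ i ∈ Finset.range n, D i ^ 2 ≤ ∑ i ∈ Finset.range N, D i ^ 2 := by
      apply Finset.sum_le_sum_of_subset_of_nonneg
      · exact Finset.range_subset_range.mpr hnN
      · intro i _ _; positivity
    have hsq : u (toPt ε k) ^ 2 = ε^2 * (∑ i ∈ Finset.range n, D i) ^ 2 := by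
      rw [huk]; ring
    rw [if_pos hk, one_mul, hsq]
    have hS0 : (0:ℝ) ≤ ∑ i ∈ Finset.range N, D i ^ 2 := by positivity
    calc ε^2 * (∑ i ∈ Finset.range n, D i) ^ 2
        ≤ ε^2 * ((n:ℝ) * ∑ i ∈ Finset.range n, D i ^ 2) := by
          apply mul_le_mul_of_nonneg_left CS (by positivity)
      _ ≤ ε^2 * ((N:ℝ) * ∑ i ∈ Finset.range N, D i ^ 2) := by
          apply mul_le_mul_of_nonneg_left _ (by positivity)
          apply mul_le_mul (by exact_mod_cast hnN) hsub (by positivity) hNpos.le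
      _ = (ε^2 * N) * ∑ i ∈ Finset.range N, D i ^ 2 := by ring
      _ = ε * ∑ i ∈ Finset.range N, D i ^ 2 := by
          congr 1
          rw [hε]
          field_simp
  · rw [if_neg hk, zero_mul]
    have : u (toPt ε k) = 0 := by
      have := hvan (k μ₀) (by omega)
      rwa [Function.update_eq_self] at this
    rw [this]
    norm_num


/-- Lemma B.2, lattice Poincaré inequality, uniform in the lattice spacing. -/
theorem lattice_poincare_inequality (d : ℕ) (hd : 1 ≤ d) :
    ∃ C : ℝ, 0 < C ∧
      ∀ N : ℕ, 0 < N →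
      ∀ u : Pt d → ℝ,
        (∀ z : Idx d, ¬ (∀ i, 0 < toPt (N : ℝ)⁻¹ z i ∧ toPt (N : ℝ)⁻¹ z i < 1) →
          u (toPt (N : ℝ)⁻¹ z) = 0) →
        eint ((N : ℝ)⁻¹) Set.univ (fun x => u x ^ 2) ≤
          ENNReal.ofReal C * ∑ μ : Fin d,
            eint ((N : ℝ)⁻¹) Set.univ (fun x => (nabla ((N : ℝ)⁻¹) (μ, true) u x) ^ 2) := by
  refine ⟨2, by norm_num, ?_⟩
  intro N hN u hu
  set ε : ℝ := (N : ℝ)⁻¹ with hεdef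
  have hNpos : (0:ℝ) < N := by exact_mod_cast hN
  have hεpos : 0 < ε := by positivity
  have hεN : ε * N = 1 := inv_mul_cancel₀ (ne_of_gt hNpos)
  have hε1 : ε ≤ 1 := by
    rw [hεdef]
    rw [inv_le_one_iff₀]
    right
    exact_mod_cast hN
  set μ₀ : Fin d := ⟨0, hd⟩ with hμ₀
  set G : Idx d → ℝ := fun k => (nabla ε (μ₀, true) u (toPt ε k)) ^ 2 with hG
  have hG0 : ∀ k, 0 ≤ G k := fun k => sq_nonneg _
  set E := Equiv.funSplitAt μ₀ ℤ with hE
  -- two computation facts about E.symm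
  have fact1 : ∀ (j : ℤ) (k' : {i : Fin d // i ≠ μ₀} → ℤ), (E.symm (j, k')) μ₀ = j := by
    intro j k'
    simp [hE, Equiv.funSplitAt_symm_apply]
  have fact2 : ∀ (j m : ℤ) (k' : {i : Fin d // i ≠ μ₀} → ℤ),
      Function.update (E.symm (j, k')) μ₀ m = E.symm (m, k') := by
    intro j m k'
    funext i
    by_cases h : i = μ₀
    · subst h; simp [hE, Equiv.funSplitAt_symm_apply]
    · simp [hE, Function.update_of_ne h, Equiv.funSplitAt_symm_apply, h]
  -- abbreviations
  set S : ({i : Fin d // i ≠ μ₀} → ℤ) → ℝ :=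
    fun k' => ∑ m ∈ Finset.range N, G (E.symm ((m : ℤ), k')) with hS
  have hS0 : ∀ k', 0 ≤ S k' := by
    intro k'; apply Finset.sum_nonneg; intro m _; exact hG0 _
  -- the full bound function
  set F : Idx d → ℝ≥0∞ := fun k => ENNReal.ofReal (ε ^ d *
    ((if 0 ≤ k μ₀ ∧ k μ₀ ≤ (N:ℤ) then (1:ℝ) else 0) *
      (ε * ∑ m ∈ Finset.range N, G (Function.update k μ₀ (m : ℤ))))) with hF
  have stepA : eint ε Set.univ (fun x => u x ^ 2) ≤ ∑' k : Idx d, F k := by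
    rw [eint]
    simp only [Set.indicator_univ]
    apply ENNReal.tsum_le_tsum
    intro k
    apply ENNReal.ofReal_le_ofReal
    apply mul_le_mul_of_nonneg_left _ (by positivity)
    exact pointwise_bound N hN u μ₀ hu k
  set T : ({i : Fin d // i ≠ μ₀} → ℤ) → ℝ≥0∞ :=
    fun k' => ENNReal.ofReal (ε ^ d * (1 * (ε * S k'))) with hT
  have hFval : ∀ (j : ℤ) (k'), F (E.symm (j, k')) =
      if 0 ≤ j ∧ j ≤ (N:ℤ) then T k' else 0 := by
    intro j k'
    rw [hF]
    simp only [fact1]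
    by_cases h : 0 ≤ j ∧ j ≤ (N:ℤ)
    · rw [if_pos h, if_pos h, hT]
      simp only [hS, fact2]
    · rw [if_neg h, if_neg h]
      simp
  have stepB : ∑' k : Idx d, F k = ∑' (j : ℤ), ∑' k', F (E.symm (j, k')) := by
    rw [← E.symm.tsum_eq F, ← ENNReal.tsum_prod]
  have stepC : ∑' (j : ℤ), ∑' k', F (E.symm (j, k')) =
      ((N + 1 : ℕ) : ℝ≥0∞) * ∑' k', T k' := by
    have : ∀ j : ℤ, (∑' k', F (E.symm (j, k'))) =
        if 0 ≤ j ∧ j ≤ (N:ℤ) then (∑' k', T k') else 0 := by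
      intro j
      by_cases h : 0 ≤ j ∧ j ≤ (N:ℤ)
      · rw [if_pos h]; congr 1; funext k'; rw [hFval, if_pos h]
      · rw [if_neg h]
        simp only [hFval, if_neg h]
        simp
    rw [tsum_congr this]
    rw [tsum_eq_sum (s := Finset.Icc (0:ℤ) N) (by
      intro j hj
      rw [if_neg]
      rw [Finset.mem_Icc] at hj
      exact hj)]
    have : ∀ j ∈ Finset.Icc (0:ℤ) (N:ℤ),
        (if 0 ≤ j ∧ j ≤ (N:ℤ) then (∑' k', T k') else 0) = ∑' k', T k' := by
      intro j hj
      rw [Finset.mem_Icc] at hj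
      rw [if_pos hj]
    rw [Finset.sum_congr rfl this, Finset.sum_const, Int.card_Icc]
    norm_num
  have stepD : ((N + 1 : ℕ) : ℝ≥0∞) * ∑' k', T k' ≤
      2 * ∑' k', ENNReal.ofReal (ε ^ d * S k') := by
    rw [← ENNReal.tsum_mul_left, ← ENNReal.tsum_mul_left]
    apply ENNReal.tsum_le_tsum
    intro k'
    rw [hT, ← ENNReal.ofReal_natCast (N+1), ← ENNReal.ofReal_mul (by positivity)]
    have h2 : (2:ℝ≥0∞) = ENNReal.ofReal 2 := by norm_num
    rw [h2, ← ENNReal.ofReal_mul (by norm_num)]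
    apply ENNReal.ofReal_le_ofReal
    have hNN : ((N + 1 : ℕ) : ℝ) * ε ≤ 2 := by
      push_cast
      have : (N:ℝ) * ε = 1 := by rw [mul_comm]; exact hεN
      nlinarith
    have expand : ((N + 1 : ℕ) : ℝ) * (ε ^ d * (1 * (ε * S k'))) =
        (((N + 1 : ℕ) : ℝ) * ε) * (ε ^ d * S k') := by ring
    rw [expand]
    apply mul_le_mul_of_nonneg_right hNN (by positivity)
  have stepE : ∑' k', ENNReal.ofReal (ε ^ d * S k') =
      ∑ m ∈ Finset.range N, ∑' k', ENNReal.ofReal (ε ^ d * G (E.symm ((m:ℤ), k'))) := by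
    rw [← Summable.tsum_finsetSum (fun i _ => ENNReal.summable)]
    congr 1
    funext k'
    rw [hS, Finset.mul_sum, ENNReal.ofReal_sum_of_nonneg]
    intro m _
    have := hG0 (E.symm ((m:ℤ), k'))
    positivity
  set t : ℤ → ℝ≥0∞ := fun j => ∑' k', ENNReal.ofReal (ε ^ d * G (E.symm (j, k'))) with ht
  have stepF : ∑ m ∈ Finset.range N, t (m:ℤ) ≤ ∑' j : ℤ, t j := by
    have himg : ∑ m ∈ Finset.range N, t (m:ℤ) =
        ∑ j ∈ (Finset.range N).image (fun m : ℕ => (m:ℤ)), t j :=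
      (Finset.sum_image (s := Finset.range N) (f := t) (g := fun m : ℕ => (m:ℤ))
        (fun x _ y _ h => by simpa using h)).symm
    rw [himg]
    exact ENNReal.sum_le_tsum _
  have stepG : ∑' j : ℤ, t j = ∑' k : Idx d, ENNReal.ofReal (ε ^ d * G k) :=
    calc ∑' j : ℤ, t j
        = ∑' (p : ℤ × ({ j // j ≠ μ₀ } → ℤ)), ENNReal.ofReal (ε ^ d * G (E.symm p)) :=
          (ENNReal.tsum_prod (f := fun j k' => ENNReal.ofReal (ε ^ d * G (E.symm (j, k'))))).symm
      _ = ∑' k : Idx d, ENNReal.ofReal (ε ^ d * G k) :=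
          E.symm.tsum_eq (fun k => ENNReal.ofReal (ε ^ d * G k))
  have final : ∑' k : Idx d, ENNReal.ofReal (ε ^ d * G k) ≤
      ∑ μ : Fin d, eint ε Set.univ (fun x => (nabla ε (μ, true) u x) ^ 2) := by
    have : ∑' k : Idx d, ENNReal.ofReal (ε ^ d * G k) =
        eint ε Set.univ (fun x => (nabla ε (μ₀, true) u x) ^ 2) := by
      rw [eint]
      simp only [Set.indicator_univ]
      rfl
    rw [this]
    exact Finset.single_le_sum (f := fun μ => eint ε Set.univ
      (fun x => (nabla ε (μ, true) u x) ^ 2)) (fun i _ => zero_le) (Finset.mem_univ μ₀)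
  calc eint ε Set.univ (fun x => u x ^ 2)
      ≤ ∑' k : Idx d, F k := stepA
    _ = ((N + 1 : ℕ) : ℝ≥0∞) * ∑' k', T k' := by rw [stepB, stepC]
    _ ≤ 2 * ∑' k', ENNReal.ofReal (ε ^ d * S k') := stepD
    _ = 2 * ∑ m ∈ Finset.range N, t (m:ℤ) := by rw [stepE]
    _ ≤ 2 * ∑' j : ℤ, t j := mul_le_mul_right stepF _
    _ = 2 * ∑' k : Idx d, ENNReal.ofReal (ε ^ d * G k) := by rw [stepG]
    _ ≤ 2 * ∑ μ : Fin d, eint ε Set.univ (fun x => (nabla ε (μ, true) u x) ^ 2) :=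
        mul_le_mul_right final _
    _ = ENNReal.ofReal 2 * ∑ μ : Fin d, eint ε Set.univ
        (fun x => (nabla ε (μ, true) u x) ^ 2) := by norm_num

end FRD
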